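/- arXiv:2311.01336 — 3 statements merged into one kernel-verified Lean document; each statement's English description precedes it below -/
import Mathlib

section
/- The fourth h-statistic is an unbiased estimator of the fourth central moment: for N ≥ 4 i.i.d. samples, E[h_4] = μ_4, where h_4 := (1/(N(N−1)(N−2)(N−3)))(−3S_1^4 + 6N S_1^2 S_2 + (9−6N)S_2^2 + (−4N^2+8N−12)S_1 S_3 + (N^3−2N^2+3N)S_4). -/
open MeasureTheory ProbabilityTheory

lemma iIndepFun_congr_ae {Ω ι : Type*} [MeasurableSpace Ω] {μ : Measure Ω} [Countable ι]
    {f g : ι → Ω → ℝ} (hf : iIndepFun f μ)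
    (h : ∀ i, f i =ᵐ[μ] g i) : iIndepFun g μ := by
  rw [iIndepFun_iff_measure_inter_preimage_eq_mul] at hf ⊢
  intro S sets hsets
  have hae : ∀ᵐ ω ∂μ, ∀ i, f i ω = g i ω := ae_all_iff.2 h
  have h1 : (⋂ i ∈ S, g i ⁻¹' sets i) =ᵐ[μ] (⋂ i ∈ S, f i ⁻¹' sets i) := by
    rw [Filter.eventuallyEq_set]
    filter_upwards [hae] with ω hω
    simp only [Set.mem_iInter, Set.mem_preimage]
    constructor <;> intro hh i hi <;> [rw [hω i]; rw [← hω i]] <;> exact hh i hi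
  rw [measure_congr h1, hf S hsets]
  exact Finset.prod_congr rfl fun i _ => measure_congr <| by
    rw [Filter.eventuallyEq_set]; filter_upwards [h i] with ω hω
    simp [Set.mem_preimage, hω]

lemma abs_mul4_le (a b c d : ℝ) : |a * b * c * d| ≤ |a|^4 + |b|^4 + |c|^4 + |d|^4 := by
  rw [abs_mul, abs_mul, abs_mul]
  nlinarith [abs_nonneg a, abs_nonneg b, abs_nonneg c, abs_nonneg d,
    sq_nonneg (|a| * |b| - |c| * |d|), sq_nonneg (|a|^2 - |b|^2), sq_nonneg (|c|^2 - |d|^2),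
    sq_nonneg (|a| * |b| + |c| * |d|), sq_nonneg (|a|^2 + |b|^2), sq_nonneg (|c|^2 + |d|^2)]

/-- The fourth h-statistic is an unbiased estimator of the fourth central moment:
for `N ≥ 4` i.i.d. samples, `E[h₄] = μ₄`, where `h₄` is expressed via the power sums
`S r = ∑ i, (X i)^r`. -/
theorem h4_unbiased {Ω : Type*} [MeasureSpace Ω]
    [IsProbabilityMeasure (ℙ : Measure Ω)]
    (N : ℕ) (hN : 4 ≤ N) (X : Fin N → Ω → ℝ)
    (hindep : iIndepFun X ℙ)
    (hident : ∀ i, IdentDistrib (X i) (X ⟨0, by omega⟩) ℙ ℙ)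
    (hL4 : ∀ i, MemLp (X i) 4 ℙ)
    (S : ℕ → Ω → ℝ) (hS : ∀ r ω, S r ω = ∑ i, (X i ω) ^ r)
    (μ₄ : ℝ)
    (hμ₄ : μ₄ = ∫ ω, (X ⟨0, by omega⟩ ω - ∫ ω', X ⟨0, by omega⟩ ω' ∂ℙ) ^ 4 ∂ℙ) :
    ∫ ω, ((N : ℝ) * ((N : ℝ) - 1) * ((N : ℝ) - 2) * ((N : ℝ) - 3))⁻¹ *
        (-3 * (S 1 ω) ^ 4 + 6 * N * (S 1 ω) ^ 2 * S 2 ω + (9 - 6 * (N : ℝ)) * (S 2 ω) ^ 2 +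
          (-4 * (N : ℝ) ^ 2 + 8 * N - 12) * S 1 ω * S 3 ω +
          ((N : ℝ) ^ 3 - 2 * (N : ℝ) ^ 2 + 3 * N) * S 4 ω) ∂ℙ = μ₄ := by
  set i0 : Fin N := ⟨0, by omega⟩ with hi0
  -- measurable versions
  set Y : Fin N → Ω → ℝ := fun i => ((hL4 i).1.mk (X i)) with hY
  have hae : ∀ i, X i =ᵐ[ℙ] Y i := fun i => (hL4 i).1.ae_eq_mk
  have hYmeas : ∀ i, Measurable (Y i) := fun i => ((hL4 i).1.stronglyMeasurable_mk).measurable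
  have hYindep : iIndepFun Y ℙ := iIndepFun_congr_ae hindep hae
  have hident' : ∀ i, IdentDistrib (X i) (X i0) ℙ ℙ := fun i =>
    (hident i).trans (hident i0).symm
  have hYident : ∀ i, IdentDistrib (Y i) (Y i0) ℙ ℙ := by
    intro i
    have h1 : IdentDistrib (Y i) (X i) ℙ ℙ :=
      (IdentDistrib.of_ae_eq (hYmeas i).aemeasurable (hae i).symm)
    have h2 : IdentDistrib (X i0) (Y i0) ℙ ℙ :=
      IdentDistrib.of_ae_eq (hL4 i0).1.aemeasurable (hae i0)
    exact (h1.trans (hident' i)).trans h2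
  have hYL4 : ∀ i, MemLp (Y i) 4 ℙ := fun i => (hL4 i).ae_eq (hae i)
  -- moments
  set m : ℕ → ℝ := fun r => ∫ ω, Y i0 ω ^ r ∂ℙ with hmdef
  have hm : ∀ (i : Fin N) (r : ℕ), ∫ ω, Y i ω ^ r ∂ℙ = m r := fun i r =>
    ((hYident i).comp (measurable_id.pow_const r)).integral_eq
  -- integrability of |Y|^4
  have hIabs : ∀ i, Integrable (fun ω => |Y i ω| ^ 4) ℙ := by
    intro i
    have h := (hYL4 i).integrable_norm_rpow (by norm_num) (by norm_num)
    rw [show ((4:ENNReal).toReal) = ((4:ℕ):ℝ) by norm_num] at h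
    simp_rw [Real.rpow_natCast, Real.norm_eq_abs] at h
    exact h
  -- integrability of powers
  have hIpow : ∀ (i : Fin N) (a : ℕ), a ≤ 4 → Integrable (fun ω => Y i ω ^ a) ℙ := by
    intro i a ha
    refine Integrable.mono' ((integrable_const 1).add (hIabs i))
      ((hYmeas i).pow_const a).aestronglyMeasurable (ae_of_all _ fun ω => ?_)
    simp only [Pi.add_apply]
    rw [Real.norm_eq_abs, abs_pow]
    rcases le_total (|Y i ω|) 1 with h | h
    · have := pow_le_one₀ (n := a) (abs_nonneg _) h
      have h2 : (0:ℝ) ≤ |Y i ω| ^ 4 := by positivity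
      linarith
    · have h1 : |Y i ω| ^ a ≤ |Y i ω| ^ 4 := pow_le_pow_right₀ h ha
      linarith
  -- integrability of 4-fold products
  have hI4 : ∀ i j k l : Fin N, Integrable (fun ω => Y i ω * Y j ω * Y k ω * Y l ω) ℙ := by
    intro i j k l
    refine Integrable.mono' (((((hIabs i).add (hIabs j))).add (hIabs k)).add (hIabs l))
      ((((hYmeas i).mul (hYmeas j)).mul (hYmeas k)).mul (hYmeas l)).aestronglyMeasurable
      (ae_of_all _ fun ω => ?_)
    simp only [Pi.add_apply]
    rw [Real.norm_eq_abs]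
    exact abs_mul4_le (Y i ω) (Y j ω) (Y k ω) (Y l ω)
  -- product moment lemmas
  have P2 : ∀ (i j : Fin N) (a b : ℕ), i ≠ j → 1 ≤ a → a ≤ 4 → 1 ≤ b → b ≤ 4 →
      ∫ ω, Y i ω ^ a * Y j ω ^ b ∂ℙ = m a * m b := by
    intro i j a b hij ha1 ha4 hb1 hb4
    have hind : IndepFun (fun ω => Y i ω ^ a) (fun ω => Y j ω ^ b) ℙ :=
      (hYindep.indepFun hij).comp (measurable_id.pow_const a) (measurable_id.pow_const b)
    have := hind.integral_fun_mul_eq_mul_integral ((hYmeas i).pow_const a).aestronglyMeasurable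
      ((hYmeas j).pow_const b).aestronglyMeasurable
    calc ∫ ω, Y i ω ^ a * Y j ω ^ b ∂ℙ
        = (∫ ω, Y i ω ^ a ∂ℙ) * ∫ ω, Y j ω ^ b ∂ℙ := this
      _ = m a * m b := by rw [hm, hm]
  have P3 : ∀ (i j k : Fin N) (a b c : ℕ), i ≠ j → i ≠ k → j ≠ k →
      1 ≤ a → a ≤ 4 → 1 ≤ b → b ≤ 4 → 1 ≤ c → c ≤ 4 →
      ∫ ω, Y i ω ^ a * Y j ω ^ b * Y k ω ^ c ∂ℙ = m a * m b * m c := by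
    intro i j k a b c hij hik hjk ha1 ha4 hb1 hb4 hc1 hc4
    have hφ : Measurable (fun p : ℝ × ℝ => p.1 ^ a * p.2 ^ b) :=
      (measurable_fst.pow_const a).mul (measurable_snd.pow_const b)
    have hind : IndepFun (fun ω => Y i ω ^ a * Y j ω ^ b) (fun ω => Y k ω ^ c) ℙ :=
      (hYindep.indepFun_prodMk hYmeas i j k hik hjk).comp hφ (measurable_id.pow_const c)
    have hmeas1 : Measurable (fun ω => Y i ω ^ a * Y j ω ^ b) :=
      ((hYmeas i).pow_const a).mul ((hYmeas j).pow_const b)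
    have := hind.integral_fun_mul_eq_mul_integral hmeas1.aestronglyMeasurable
      ((hYmeas k).pow_const c).aestronglyMeasurable
    calc ∫ ω, Y i ω ^ a * Y j ω ^ b * Y k ω ^ c ∂ℙ
        = (∫ ω, Y i ω ^ a * Y j ω ^ b ∂ℙ) * ∫ ω, Y k ω ^ c ∂ℙ := this
      _ = m a * m b * m c := by rw [P2 i j a b hij ha1 ha4 hb1 hb4, hm]
  have P4 : ∀ (i j k l : Fin N) (a b c d : ℕ), i ≠ j → i ≠ k → i ≠ l → j ≠ k → j ≠ l → k ≠ l →
      1 ≤ a → a ≤ 4 → 1 ≤ b → b ≤ 4 → 1 ≤ c → c ≤ 4 → 1 ≤ d → d ≤ 4 →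
      ∫ ω, Y i ω ^ a * Y j ω ^ b * (Y k ω ^ c * Y l ω ^ d) ∂ℙ = m a * m b * (m c * m d) := by
    intro i j k l a b c d hij hik hil hjk hjl hkl ha1 ha4 hb1 hb4 hc1 hc4 hd1 hd4
    have hφ : Measurable (fun p : ℝ × ℝ => p.1 ^ a * p.2 ^ b) :=
      (measurable_fst.pow_const a).mul (measurable_snd.pow_const b)
    have hψ : Measurable (fun p : ℝ × ℝ => p.1 ^ c * p.2 ^ d) :=
      (measurable_fst.pow_const c).mul (measurable_snd.pow_const d)
    have hind : IndepFun (fun ω => Y i ω ^ a * Y j ω ^ b) (fun ω => Y k ω ^ c * Y l ω ^ d) ℙ :=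
      (hYindep.indepFun_prodMk_prodMk hYmeas i j k l hik hil hjk hjl).comp hφ hψ
    have hmeas1 : Measurable (fun ω => Y i ω ^ a * Y j ω ^ b) :=
      ((hYmeas i).pow_const a).mul ((hYmeas j).pow_const b)
    have hmeas2 : Measurable (fun ω => Y k ω ^ c * Y l ω ^ d) :=
      ((hYmeas k).pow_const c).mul ((hYmeas l).pow_const d)
    have := hind.integral_fun_mul_eq_mul_integral hmeas1.aestronglyMeasurable hmeas2.aestronglyMeasurable
    calc ∫ ω, Y i ω ^ a * Y j ω ^ b * (Y k ω ^ c * Y l ω ^ d) ∂ℙ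
        = (∫ ω, Y i ω ^ a * Y j ω ^ b ∂ℙ) * ∫ ω, Y k ω ^ c * Y l ω ^ d ∂ℙ := this
      _ = m a * m b * (m c * m d) := by
          rw [P2 i j a b hij ha1 ha4 hb1 hb4, P2 k l c d hkl hc1 hc4 hd1 hd4]
  -- sum splitting helpers
  have key1 : ∀ (i : Fin N) (A B : ℝ), (∑ j, if j = i then A else B) = (N : ℝ) * B + (A - B) := by
    intro i A B
    have : ∀ j : Fin N, (if j = i then A else B) = B + (if j = i then A - B else 0) := by
      intro j; by_cases h : j = i <;> simp [h]
    rw [Finset.sum_congr rfl fun j _ => this j, Finset.sum_add_distrib, Finset.sum_const,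
      Finset.sum_ite_eq']
    simp [Finset.card_univ, mul_comm]
  have key2 : ∀ (i j : Fin N) (A B C : ℝ), i ≠ j →
      (∑ k, if k = i then A else if k = j then B else C)
        = (N : ℝ) * C + (A - C) + (B - C) := by
    intro i j A B C hij
    have : ∀ k : Fin N, (if k = i then A else if k = j then B else C)
        = C + (if k = i then A - C else 0) + (if k = j then B - C else 0) := by
      intro k
      rcases eq_or_ne k i with h1 | h1
      · subst h1; simp [hij]
      · rcases eq_or_ne k j with h2 | h2
        · subst h2; simp [h1]
        · simp [h1, h2]
    rw [Finset.sum_congr rfl fun k _ => this k, Finset.sum_add_distrib, Finset.sum_add_distrib,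
      Finset.sum_const, Finset.sum_ite_eq', Finset.sum_ite_eq']
    simp [Finset.card_univ, mul_comm]
  have key3 : ∀ (i j k : Fin N) (A B C D : ℝ), i ≠ j → i ≠ k → j ≠ k →
      (∑ l, if l = i then A else if l = j then B else if l = k then C else D)
        = (N : ℝ) * D + (A - D) + (B - D) + (C - D) := by
    intro i j k A B C D hij hik hjk
    have : ∀ l : Fin N, (if l = i then A else if l = j then B else if l = k then C else D)
        = D + (if l = i then A - D else 0) + (if l = j then B - D else 0)
          + (if l = k then C - D else 0) := by
      intro l
      rcases eq_or_ne l i with h1 | h1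
      · subst h1; simp [hij, hik]
      · rcases eq_or_ne l j with h2 | h2
        · subst h2; simp [h1, hjk]
        · rcases eq_or_ne l k with h3 | h3
          · subst h3; simp [h1, h2]
          · simp [h1, h2, h3]
    rw [Finset.sum_congr rfl fun l _ => this l, Finset.sum_add_distrib, Finset.sum_add_distrib,
      Finset.sum_add_distrib, Finset.sum_const, Finset.sum_ite_eq', Finset.sum_ite_eq',
      Finset.sum_ite_eq']
    simp [Finset.card_univ, mul_comm]
  -- derived integrability
  have hI31 : ∀ i j : Fin N, Integrable (fun ω => Y i ω * Y j ω ^ 3) ℙ := by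
    intro i j
    have h := hI4 i j j j
    rwa [show (fun ω => Y i ω * Y j ω * Y j ω * Y j ω) = fun ω => Y i ω * Y j ω ^ 3
      from funext fun ω => by ring] at h
  have hI22 : ∀ i j : Fin N, Integrable (fun ω => Y i ω ^ 2 * Y j ω ^ 2) ℙ := by
    intro i j
    have h := hI4 i i j j
    rwa [show (fun ω => Y i ω * Y i ω * Y j ω * Y j ω) = fun ω => Y i ω ^ 2 * Y j ω ^ 2
      from funext fun ω => by ring] at h
  have hI112 : ∀ i j k : Fin N, Integrable (fun ω => Y i ω * Y j ω * Y k ω ^ 2) ℙ := by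
    intro i j k
    have h := hI4 i j k k
    rwa [show (fun ω => Y i ω * Y j ω * Y k ω * Y k ω) = fun ω => Y i ω * Y j ω * Y k ω ^ 2
      from funext fun ω => by ring] at h
  -- leaf values
  have V13 : ∀ i j : Fin N, ∫ ω, Y i ω * Y j ω ^ 3 ∂ℙ = if j = i then m 4 else m 1 * m 3 := by
    intro i j
    rcases eq_or_ne j i with rfl | h
    · rw [if_pos rfl, show (fun ω => Y j ω * Y j ω ^ 3) = fun ω => Y j ω ^ 4
        from funext fun ω => by ring, hm]
    · rw [if_neg h, show (fun ω => Y i ω * Y j ω ^ 3) = fun ω => Y i ω ^ 1 * Y j ω ^ 3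
        from funext fun ω => by ring]
      exact P2 i j 1 3 (Ne.symm h) le_rfl (by norm_num) (by norm_num) (by norm_num)
  have V22 : ∀ i j : Fin N, ∫ ω, Y i ω ^ 2 * Y j ω ^ 2 ∂ℙ = if j = i then m 4 else m 2 * m 2 := by
    intro i j
    rcases eq_or_ne j i with rfl | h
    · rw [if_pos rfl, show (fun ω => Y j ω ^ 2 * Y j ω ^ 2) = fun ω => Y j ω ^ 4
        from funext fun ω => by ring, hm]
    · rw [if_neg h]
      exact P2 i j 2 2 (Ne.symm h) (by norm_num) (by norm_num) (by norm_num) (by norm_num)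
  have V112 : ∀ i j k : Fin N, ∫ ω, Y i ω * Y j ω * Y k ω ^ 2 ∂ℙ =
      if j = i then (if k = i then m 4 else m 2 * m 2)
      else (if k = i then m 3 * m 1 else if k = j then m 1 * m 3 else m 1 * m 1 * m 2) := by
    intro i j k
    rcases eq_or_ne j i with rfl | hji
    · rw [if_pos rfl]
      rcases eq_or_ne k j with rfl | hki
      · rw [if_pos rfl, show (fun ω => Y k ω * Y k ω * Y k ω ^ 2) = fun ω => Y k ω ^ 4
          from funext fun ω => by ring, hm]
      · rw [if_neg hki, show (fun ω => Y j ω * Y j ω * Y k ω ^ 2) = fun ω => Y j ω ^ 2 * Y k ω ^ 2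
          from funext fun ω => by ring]
        exact P2 j k 2 2 (Ne.symm hki) (by norm_num) (by norm_num) (by norm_num) (by norm_num)
    · rw [if_neg hji]
      rcases eq_or_ne k i with rfl | hki
      · rw [if_pos rfl, show (fun ω => Y k ω * Y j ω * Y k ω ^ 2) = fun ω => Y k ω ^ 3 * Y j ω ^ 1
          from funext fun ω => by ring]
        exact P2 k j 3 1 (Ne.symm hji) (by norm_num) (by norm_num) (by norm_num) (by norm_num)
      · rw [if_neg hki]
        rcases eq_or_ne k j with rfl | hkj
        · rw [if_pos rfl, show (fun ω => Y i ω * Y k ω * Y k ω ^ 2) = fun ω => Y i ω ^ 1 * Y k ω ^ 3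
            from funext fun ω => by ring]
          exact P2 i k 1 3 (Ne.symm hki) (by norm_num) (by norm_num) (by norm_num) (by norm_num)
        · rw [if_neg hkj, show (fun ω => Y i ω * Y j ω * Y k ω ^ 2)
            = fun ω => Y i ω ^ 1 * Y j ω ^ 1 * Y k ω ^ 2 from funext fun ω => by ring]
          exact P3 i j k 1 1 2 (Ne.symm hji) (Ne.symm hki) (Ne.symm hkj) (by norm_num)
            (by norm_num) (by norm_num) (by norm_num) (by norm_num) (by norm_num)
  have V1111 : ∀ i j k l : Fin N, ∫ ω, Y i ω * Y j ω * Y k ω * Y l ω ∂ℙ =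
      if j = i then
        (if k = i then (if l = i then m 4 else m 3 * m 1)
         else (if l = i then m 3 * m 1 else if l = k then m 2 * m 2 else m 2 * m 1 * m 1))
      else
        (if k = i then (if l = i then m 3 * m 1 else if l = j then m 2 * m 2 else m 2 * m 1 * m 1)
         else if k = j then (if l = i then m 2 * m 2 else if l = j then m 1 * m 3 else m 1 * m 2 * m 1)
         else (if l = i then m 2 * m 1 * m 1 else if l = j then m 1 * m 2 * m 1
               else if l = k then m 1 * m 1 * m 2 else m 1 * m 1 * (m 1 * m 1))) := by
    intro i j k l
    rcases eq_or_ne j i with rfl | hji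
    · rw [if_pos rfl]
      rcases eq_or_ne k j with rfl | hki
      · rw [if_pos rfl]
        rcases eq_or_ne l k with rfl | hli
        · rw [if_pos rfl, show (fun ω => Y l ω * Y l ω * Y l ω * Y l ω) = fun ω => Y l ω ^ 4
            from funext fun ω => by ring, hm]
        · rw [if_neg hli, show (fun ω => Y k ω * Y k ω * Y k ω * Y l ω)
            = fun ω => Y k ω ^ 3 * Y l ω ^ 1 from funext fun ω => by ring]
          exact P2 k l 3 1 (Ne.symm hli) (by norm_num) (by norm_num) (by norm_num) (by norm_num)
      · rw [if_neg hki]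
        rcases eq_or_ne l j with rfl | hli
        · rw [if_pos rfl, show (fun ω => Y l ω * Y l ω * Y k ω * Y l ω)
            = fun ω => Y l ω ^ 3 * Y k ω ^ 1 from funext fun ω => by ring]
          exact P2 l k 3 1 (Ne.symm hki) (by norm_num) (by norm_num) (by norm_num) (by norm_num)
        · rw [if_neg hli]
          rcases eq_or_ne l k with rfl | hlk
          · rw [if_pos rfl, show (fun ω => Y j ω * Y j ω * Y l ω * Y l ω)
              = fun ω => Y j ω ^ 2 * Y l ω ^ 2 from funext fun ω => by ring]
            exact P2 j l 2 2 (Ne.symm hli) (by norm_num) (by norm_num) (by norm_num) (by norm_num)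
          · rw [if_neg hlk, show (fun ω => Y j ω * Y j ω * Y k ω * Y l ω)
              = fun ω => Y j ω ^ 2 * Y k ω ^ 1 * Y l ω ^ 1 from funext fun ω => by ring]
            exact P3 j k l 2 1 1 (Ne.symm hki) (Ne.symm hli) (Ne.symm hlk) (by norm_num)
              (by norm_num) (by norm_num) (by norm_num) (by norm_num) (by norm_num)
    · rw [if_neg hji]
      rcases eq_or_ne k i with rfl | hki
      · rw [if_pos rfl]
        rcases eq_or_ne l k with rfl | hli
        · rw [if_pos rfl, show (fun ω => Y l ω * Y j ω * Y l ω * Y l ω)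
            = fun ω => Y l ω ^ 3 * Y j ω ^ 1 from funext fun ω => by ring]
          exact P2 l j 3 1 (Ne.symm hji) (by norm_num) (by norm_num) (by norm_num) (by norm_num)
        · rw [if_neg hli]
          rcases eq_or_ne l j with rfl | hlj
          · rw [if_pos rfl, show (fun ω => Y k ω * Y l ω * Y k ω * Y l ω)
              = fun ω => Y k ω ^ 2 * Y l ω ^ 2 from funext fun ω => by ring]
            exact P2 k l 2 2 (Ne.symm hji) (by norm_num) (by norm_num) (by norm_num) (by norm_num)
          · rw [if_neg hlj, show (fun ω => Y k ω * Y j ω * Y k ω * Y l ω)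
              = fun ω => Y k ω ^ 2 * Y j ω ^ 1 * Y l ω ^ 1 from funext fun ω => by ring]
            exact P3 k j l 2 1 1 (Ne.symm hji) (Ne.symm hli) (Ne.symm hlj) (by norm_num)
              (by norm_num) (by norm_num) (by norm_num) (by norm_num) (by norm_num)
      · rw [if_neg hki]
        rcases eq_or_ne k j with rfl | hkj
        · rw [if_pos rfl]
          rcases eq_or_ne l i with rfl | hli
          · rw [if_pos rfl, show (fun ω => Y l ω * Y k ω * Y k ω * Y l ω)
              = fun ω => Y l ω ^ 2 * Y k ω ^ 2 from funext fun ω => by ring]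
            exact P2 l k 2 2 (Ne.symm hji) (by norm_num) (by norm_num) (by norm_num) (by norm_num)
          · rw [if_neg hli]
            rcases eq_or_ne l k with rfl | hlj
            · rw [if_pos rfl, show (fun ω => Y i ω * Y l ω * Y l ω * Y l ω)
                = fun ω => Y i ω ^ 1 * Y l ω ^ 3 from funext fun ω => by ring]
              exact P2 i l 1 3 (Ne.symm hli) (by norm_num) (by norm_num) (by norm_num)
                (by norm_num)
            · rw [if_neg hlj, show (fun ω => Y i ω * Y k ω * Y k ω * Y l ω)
                = fun ω => Y i ω ^ 1 * Y k ω ^ 2 * Y l ω ^ 1 from funext fun ω => by ring]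
              exact P3 i k l 1 2 1 (Ne.symm hji) (Ne.symm hli) (Ne.symm hlj) (by norm_num)
                (by norm_num) (by norm_num) (by norm_num) (by norm_num) (by norm_num)
        · rw [if_neg hkj]
          rcases eq_or_ne l i with rfl | hli
          · rw [if_pos rfl, show (fun ω => Y l ω * Y j ω * Y k ω * Y l ω)
              = fun ω => Y l ω ^ 2 * Y j ω ^ 1 * Y k ω ^ 1 from funext fun ω => by ring]
            exact P3 l j k 2 1 1 (Ne.symm hji) (Ne.symm hki) (Ne.symm hkj) (by norm_num)
              (by norm_num) (by norm_num) (by norm_num) (by norm_num) (by norm_num)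
          · rw [if_neg hli]
            rcases eq_or_ne l j with rfl | hlj
            · rw [if_pos rfl, show (fun ω => Y i ω * Y l ω * Y k ω * Y l ω)
                = fun ω => Y i ω ^ 1 * Y l ω ^ 2 * Y k ω ^ 1 from funext fun ω => by ring]
              exact P3 i l k 1 2 1 (Ne.symm hli) (Ne.symm hki) (Ne.symm hkj) (by norm_num)
                (by norm_num) (by norm_num) (by norm_num) (by norm_num) (by norm_num)
            · rw [if_neg hlj]
              rcases eq_or_ne l k with rfl | hlk
              · rw [if_pos rfl, show (fun ω => Y i ω * Y j ω * Y l ω * Y l ω)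
                  = fun ω => Y i ω ^ 1 * Y j ω ^ 1 * Y l ω ^ 2 from funext fun ω => by ring]
                exact P3 i j l 1 1 2 (Ne.symm hji) (Ne.symm hli) (Ne.symm hlj) (by norm_num)
                  (by norm_num) (by norm_num) (by norm_num) (by norm_num) (by norm_num)
              · rw [if_neg hlk, show (fun ω => Y i ω * Y j ω * Y k ω * Y l ω)
                  = fun ω => Y i ω ^ 1 * Y j ω ^ 1 * (Y k ω ^ 1 * Y l ω ^ 1)
                  from funext fun ω => by ring]
                exact P4 i j k l 1 1 1 1 (Ne.symm hji) (Ne.symm hki) (Ne.symm hli)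
                  (Ne.symm hkj) (Ne.symm hlj) (Ne.symm hlk) (by norm_num) (by norm_num)
                  (by norm_num) (by norm_num) (by norm_num) (by norm_num) (by norm_num)
                  (by norm_num)
  -- level sums for E1
  have L_l : ∀ i j k : Fin N, (∑ l, ∫ ω, Y i ω * Y j ω * Y k ω * Y l ω ∂ℙ) =
      if j = i then (if k = i then ((N : ℝ) * (m 3 * m 1) + (m 4 - m 3 * m 1)) else ((N : ℝ) * (m 2 * m 1 * m 1) + (m 3 * m 1 - m 2 * m 1 * m 1) + (m 2 * m 2 - m 2 * m 1 * m 1)))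
      else (if k = i then ((N : ℝ) * (m 2 * m 1 * m 1) + (m 3 * m 1 - m 2 * m 1 * m 1) + (m 2 * m 2 - m 2 * m 1 * m 1)) else if k = j then ((N : ℝ) * (m 1 * m 2 * m 1) + (m 2 * m 2 - m 1 * m 2 * m 1) + (m 1 * m 3 - m 1 * m 2 * m 1)) else ((N : ℝ) * (m 1 * m 1 * (m 1 * m 1)) + (m 2 * m 1 * m 1 - (m 1 * m 1 * (m 1 * m 1))) + (m 1 * m 2 * m 1 - (m 1 * m 1 * (m 1 * m 1))) + (m 1 * m 1 * m 2 - (m 1 * m 1 * (m 1 * m 1))))) := by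
    intro i j k
    rcases eq_or_ne j i with hj | hj
    · rw [if_pos hj]
      rcases eq_or_ne k i with hk | hk
      · rw [if_pos hk]
        rw [Finset.sum_congr rfl fun l _ => (V1111 i j k l).trans
          (by rw [if_pos hj, if_pos hk])]
        exact key1 i (m 4) (m 3 * m 1)
      · rw [if_neg hk]
        rw [Finset.sum_congr rfl fun l _ => (V1111 i j k l).trans
          (by rw [if_pos hj, if_neg hk])]
        exact key2 i k (m 3 * m 1) (m 2 * m 2) (m 2 * m 1 * m 1) (Ne.symm hk)
    · rw [if_neg hj]
      rcases eq_or_ne k i with hk | hk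
      · rw [if_pos hk]
        rw [Finset.sum_congr rfl fun l _ => (V1111 i j k l).trans
          (by rw [if_neg hj, if_pos hk])]
        exact key2 i j (m 3 * m 1) (m 2 * m 2) (m 2 * m 1 * m 1) (Ne.symm hj)
      · rw [if_neg hk]
        rcases eq_or_ne k j with hk2 | hk2
        · rw [if_pos hk2]
          rw [Finset.sum_congr rfl fun l _ => (V1111 i j k l).trans
            (by rw [if_neg hj, if_neg hk, if_pos hk2])]
          exact key2 i j (m 2 * m 2) (m 1 * m 3) (m 1 * m 2 * m 1) (Ne.symm hj)
        · rw [if_neg hk2]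
          rw [Finset.sum_congr rfl fun l _ => (V1111 i j k l).trans
            (by rw [if_neg hj, if_neg hk, if_neg hk2])]
          exact key3 i j k (m 2 * m 1 * m 1) (m 1 * m 2 * m 1) (m 1 * m 1 * m 2)
            (m 1 * m 1 * (m 1 * m 1)) (Ne.symm hj) (Ne.symm hk) (Ne.symm hk2)
  have L_k : ∀ i j : Fin N, (∑ k, ∑ l, ∫ ω, Y i ω * Y j ω * Y k ω * Y l ω ∂ℙ) =
      if j = i then ((N : ℝ) * ((N : ℝ) * (m 2 * m 1 * m 1) + (m 3 * m 1 - m 2 * m 1 * m 1) + (m 2 * m 2 - m 2 * m 1 * m 1)) + (((N : ℝ) * (m 3 * m 1) + (m 4 - m 3 * m 1)) - ((N : ℝ) * (m 2 * m 1 * m 1) + (m 3 * m 1 - m 2 * m 1 * m 1) + (m 2 * m 2 - m 2 * m 1 * m 1)))) else ((N : ℝ) * ((N : ℝ) * (m 1 * m 1 * (m 1 * m 1)) + (m 2 * m 1 * m 1 - (m 1 * m 1 * (m 1 * m 1))) + (m 1 * m 2 * m 1 - (m 1 * m 1 * (m 1 * m 1))) + (m 1 * m 1 * m 2 - (m 1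 * m 1 * (m 1 * m 1)))) + (((N : ℝ) * (m 2 * m 1 * m 1) + (m 3 * m 1 - m 2 * m 1 * m 1) + (m 2 * m 2 - m 2 * m 1 * m 1)) - ((N : ℝ) * (m 1 * m 1 * (m 1 * m 1)) + (m 2 * m 1 * m 1 - (m 1 * m 1 * (m 1 * m 1))) + (m 1 * m 2 * m 1 - (m 1 * m 1 * (m 1 * m 1))) + (m 1 * m 1 * m 2 - (m 1 * m 1 * (m 1 * m 1))))) + (((N : ℝ) * (m 1 * m 2 * m 1) + (m 2 * m 2 - m 1 * m 2 * m 1) + (m 1 * m 3 - m 1 * m 2 * m 1)) - ((N : ℝ) * (m 1 * m 1 * (m 1 * m 1)) + (m 2 * m 1 * m 1 - (m 1 * m 1 * (m 1 * m 1))) + (m 1 * m 2 * m 1 - (m 1 * m 1 * (m 1 * m 1))) + (m 1 * m 1 * m 2 - (m 1 * m 1 * (m 1 * m 1)))))) := by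
    intro i j
    rcases eq_or_ne j i with hj | hj
    · rw [if_pos hj]
      rw [Finset.sum_congr rfl fun k _ => (L_l i j k).trans (by rw [if_pos hj])]
      exact key1 i ((N : ℝ) * (m 3 * m 1) + (m 4 - m 3 * m 1)) ((N : ℝ) * (m 2 * m 1 * m 1) + (m 3 * m 1 - m 2 * m 1 * m 1) + (m 2 * m 2 - m 2 * m 1 * m 1))
    · rw [if_neg hj]
      rw [Finset.sum_congr rfl fun k _ => (L_l i j k).trans (by rw [if_neg hj])]
      exact key2 i j ((N : ℝ) * (m 2 * m 1 * m 1) + (m 3 * m 1 - m 2 * m 1 * m 1) + (m 2 * m 2 - m 2 * m 1 * m 1)) ((N : ℝ) * (m 1 * m 2 * m 1) + (m 2 * m 2 - m 1 * m 2 * m 1) + (m 1 * m 3 - m 1 * m 2 * m 1)) ((N : ℝ) * (m 1 * m 1 * (m 1 * m 1)) + (m 2 * m 1 * m 1 - (m 1 * m 1 * (m 1 * m 1))) + (m 1 * m 2 * m 1 - (m 1 * m 1 * (m 1 * m 1))) + (m 1 * m 1 * m 2 - (m 1 * m 1 * (m 1 * m 1)))) (Ne.symm hj)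
  have L_j : ∀ i : Fin N, (∑ j, ∑ k, ∑ l, ∫ ω, Y i ω * Y j ω * Y k ω * Y l ω ∂ℙ) =
      (N : ℝ) * ((N : ℝ) * ((N : ℝ) * (m 1 * m 1 * (m 1 * m 1)) + (m 2 * m 1 * m 1 - (m 1 * m 1 * (m 1 * m 1))) + (m 1 * m 2 * m 1 - (m 1 * m 1 * (m 1 * m 1))) + (m 1 * m 1 * m 2 - (m 1 * m 1 * (m 1 * m 1)))) + (((N : ℝ) * (m 2 * m 1 * m 1) + (m 3 * m 1 - m 2 * m 1 * m 1) + (m 2 * m 2 - m 2 * m 1 * m 1)) - ((N : ℝ) * (m 1 * m 1 * (m 1 * m 1)) + (m 2 * m 1 * m 1 - (m 1 * m 1 * (m 1 * m 1))) + (m 1 * m 2 * m 1 - (m 1 * m 1 * (m 1 * m 1))) + (m 1 * m 1 * m 2 - (m 1 * m 1 * (m 1 * m 1))))) + (((N : ℝ) * (m 1 * m 2 * m 1) + (m 2 * m 2 - m 1 * m 2 * m 1) + (m 1 * m 3 - m 1 * m 2 * m 1)) - ((N : ℝ) * (m 1 * m 1 * (m 1 * m 1)) + (m 2 * m 1 *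 m 1 - (m 1 * m 1 * (m 1 * m 1))) + (m 1 * m 2 * m 1 - (m 1 * m 1 * (m 1 * m 1))) + (m 1 * m 1 * m 2 - (m 1 * m 1 * (m 1 * m 1)))))) + (((N : ℝ) * ((N : ℝ) * (m 2 * m 1 * m 1) + (m 3 * m 1 - m 2 * m 1 * m 1) + (m 2 * m 2 - m 2 * m 1 * m 1)) + (((N : ℝ) * (m 3 * m 1) + (m 4 - m 3 * m 1)) - ((N : ℝ) * (m 2 * m 1 * m 1) + (m 3 * m 1 - m 2 * m 1 * m 1) + (m 2 * m 2 - m 2 * m 1 * m 1)))) - ((N : ℝ) * ((N : ℝ) * (m 1 * m 1 * (m 1 * m 1)) + (m 2 * m 1 * m 1 - (m 1 * m 1 * (m 1 * m 1))) + (m 1 * m 2 * m 1 - (m 1 * m 1 * (m 1 * m 1))) + (m 1 * m 1 * m 2 - (m 1 * m 1 * (m 1 * m 1)))) + (((N : ℝ) * (m 2 * m 1 * m 1) + (m 3 * m 1 - m 2 * m 1 * m 1) + (m 2 * m 2 - m 2 * m 1 * m 1)) - ((N : ℝ) * (m 1 * m 1 * (m 1 * m 1)) + (m 2 * m 1 *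 m 1 - (m 1 * m 1 * (m 1 * m 1))) + (m 1 * m 2 * m 1 - (m 1 * m 1 * (m 1 * m 1))) + (m 1 * m 1 * m 2 - (m 1 * m 1 * (m 1 * m 1))))) + (((N : ℝ) * (m 1 * m 2 * m 1) + (m 2 * m 2 - m 1 * m 2 * m 1) + (m 1 * m 3 - m 1 * m 2 * m 1)) - ((N : ℝ) * (m 1 * m 1 * (m 1 * m 1)) + (m 2 * m 1 * m 1 - (m 1 * m 1 * (m 1 * m 1))) + (m 1 * m 2 * m 1 - (m 1 * m 1 * (m 1 * m 1))) + (m 1 * m 1 * m 2 - (m 1 * m 1 * (m 1 * m 1))))))) := by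
    intro i
    rw [Finset.sum_congr rfl fun j _ => L_k i j]
    exact key1 i ((N : ℝ) * ((N : ℝ) * (m 2 * m 1 * m 1) + (m 3 * m 1 - m 2 * m 1 * m 1) + (m 2 * m 2 - m 2 * m 1 * m 1)) + (((N : ℝ) * (m 3 * m 1) + (m 4 - m 3 * m 1)) - ((N : ℝ) * (m 2 * m 1 * m 1) + (m 3 * m 1 - m 2 * m 1 * m 1) + (m 2 * m 2 - m 2 * m 1 * m 1)))) ((N : ℝ) * ((N : ℝ) * (m 1 * m 1 * (m 1 * m 1)) + (m 2 * m 1 * m 1 - (m 1 * m 1 * (m 1 * m 1))) + (m 1 * m 2 * m 1 - (m 1 * m 1 * (m 1 * m 1))) + (m 1 * m 1 * m 2 - (m 1 * m 1 * (m 1 * m 1)))) + (((N : ℝ) * (m 2 * m 1 * m 1) + (m 3 * m 1 - m 2 * m 1 * m 1) + (m 2 * m 2 - m 2 * m 1 * m 1)) - ((N : ℝ) * (m 1 * m 1 * (m 1 * m 1)) + (m 2 * m 1 * m 1 - (m 1 * m 1 * (m 1 * m 1))) + (m 1 * m 2 * m 1 - (m 1 * m 1 * (m 1 * m 1))) + (m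 1 * m 1 * m 2 - (m 1 * m 1 * (m 1 * m 1))))) + (((N : ℝ) * (m 1 * m 2 * m 1) + (m 2 * m 2 - m 1 * m 2 * m 1) + (m 1 * m 3 - m 1 * m 2 * m 1)) - ((N : ℝ) * (m 1 * m 1 * (m 1 * m 1)) + (m 2 * m 1 * m 1 - (m 1 * m 1 * (m 1 * m 1))) + (m 1 * m 2 * m 1 - (m 1 * m 1 * (m 1 * m 1))) + (m 1 * m 1 * m 2 - (m 1 * m 1 * (m 1 * m 1))))))
  have hV1 : (∑ i, ∑ j, ∑ k, ∑ l, ∫ ω, Y i ω * Y j ω * Y k ω * Y l ω ∂ℙ) = (N : ℝ) * ((N : ℝ) * ((N : ℝ) * ((N : ℝ) * (m 1 * m 1 * (m 1 * m 1)) + (m 2 * m 1 * m 1 - (m 1 * m 1 * (m 1 * m 1))) + (m 1 * m 2 * m 1 - (m 1 * m 1 * (m 1 * m 1))) + (m 1 * m 1 * m 2 - (m 1 * m 1 * (m 1 * m 1)))) + (((N : ℝ) * (m 2 * m 1 * m 1) + (m 3 * m 1 - m 2 * m 1 * m 1) + (m 2 * m 2 - m 2 * m 1 * m 1)) - ((N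 : ℝ) * (m 1 * m 1 * (m 1 * m 1)) + (m 2 * m 1 * m 1 - (m 1 * m 1 * (m 1 * m 1))) + (m 1 * m 2 * m 1 - (m 1 * m 1 * (m 1 * m 1))) + (m 1 * m 1 * m 2 - (m 1 * m 1 * (m 1 * m 1))))) + (((N : ℝ) * (m 1 * m 2 * m 1) + (m 2 * m 2 - m 1 * m 2 * m 1) + (m 1 * m 3 - m 1 * m 2 * m 1)) - ((N : ℝ) * (m 1 * m 1 * (m 1 * m 1)) + (m 2 * m 1 * m 1 - (m 1 * m 1 * (m 1 * m 1))) + (m 1 * m 2 * m 1 - (m 1 * m 1 * (m 1 * m 1))) + (m 1 * m 1 * m 2 - (m 1 * m 1 * (m 1 * m 1)))))) + (((N : ℝ) * ((N : ℝ) * (m 2 * m 1 * m 1) + (m 3 * m 1 - m 2 * m 1 * m 1) + (m 2 * m 2 - m 2 * m 1 * m 1)) + (((N : ℝ) * (m 3 * m 1) + (m 4 - m 3 * m 1)) - ((N : ℝ) * (m 2 * m 1 * m 1) + (m 3 * m 1 - m 2 * m 1 * m 1) + (m 2 * m 2 - m 2 * m 1 * m 1)))) - ((N : ℝ) * ((N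 : ℝ) * (m 1 * m 1 * (m 1 * m 1)) + (m 2 * m 1 * m 1 - (m 1 * m 1 * (m 1 * m 1))) + (m 1 * m 2 * m 1 - (m 1 * m 1 * (m 1 * m 1))) + (m 1 * m 1 * m 2 - (m 1 * m 1 * (m 1 * m 1)))) + (((N : ℝ) * (m 2 * m 1 * m 1) + (m 3 * m 1 - m 2 * m 1 * m 1) + (m 2 * m 2 - m 2 * m 1 * m 1)) - ((N : ℝ) * (m 1 * m 1 * (m 1 * m 1)) + (m 2 * m 1 * m 1 - (m 1 * m 1 * (m 1 * m 1))) + (m 1 * m 2 * m 1 - (m 1 * m 1 * (m 1 * m 1))) + (m 1 * m 1 * m 2 - (m 1 * m 1 * (m 1 * m 1))))) + (((N : ℝ) * (m 1 * m 2 * m 1) + (m 2 * m 2 - m 1 * m 2 * m 1) + (m 1 * m 3 - m 1 * m 2 * m 1)) - ((N : ℝ) * (m 1 * m 1 * (m 1 * m 1)) + (m 2 * m 1 * m 1 - (m 1 * m 1 * (m 1 * m 1))) + (m 1 * m 2 * m 1 - (m 1 * m 1 * (m 1 * m 1))) + (m 1 * m 1 * m 2 - (m 1 * m 1 * (m 1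 * m 1)))))))) := by
    rw [Finset.sum_congr rfl fun i _ => L_j i, Finset.sum_const, Finset.card_univ,
      Fintype.card_fin, nsmul_eq_mul]
  -- level sums for E2
  have M_k : ∀ i j : Fin N, (∑ k, ∫ ω, Y i ω * Y j ω * Y k ω ^ 2 ∂ℙ) =
      if j = i then ((N : ℝ) * (m 2 * m 2) + (m 4 - m 2 * m 2)) else ((N : ℝ) * (m 1 * m 1 * m 2) + (m 3 * m 1 - m 1 * m 1 * m 2) + (m 1 * m 3 - m 1 * m 1 * m 2)) := by
    intro i j
    rcases eq_or_ne j i with hj | hj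
    · rw [if_pos hj]
      rw [Finset.sum_congr rfl fun k _ => (V112 i j k).trans (by rw [if_pos hj])]
      exact key1 i (m 4) (m 2 * m 2)
    · rw [if_neg hj]
      rw [Finset.sum_congr rfl fun k _ => (V112 i j k).trans (by rw [if_neg hj])]
      exact key2 i j (m 3 * m 1) (m 1 * m 3) (m 1 * m 1 * m 2) (Ne.symm hj)
  have hV2 : (∑ i, ∑ j, ∑ k, ∫ ω, Y i ω * Y j ω * Y k ω ^ 2 ∂ℙ) = (N : ℝ) * ((N : ℝ) * ((N : ℝ) * (m 1 * m 1 * m 2) + (m 3 * m 1 - m 1 * m 1 * m 2) + (m 1 * m 3 - m 1 * m 1 * m 2)) + (((N : ℝ) * (m 2 * m 2) + (m 4 - m 2 * m 2)) - ((N : ℝ) * (m 1 * m 1 * m 2) + (m 3 * m 1 - m 1 * m 1 * m 2) + (m 1 * m 3 - m 1 * m 1 * m 2)))) := by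
    rw [Finset.sum_congr rfl fun i _ => (Finset.sum_congr rfl fun j _ => M_k i j).trans
      (key1 i ((N : ℝ) * (m 2 * m 2) + (m 4 - m 2 * m 2)) ((N : ℝ) * (m 1 * m 1 * m 2) + (m 3 * m 1 - m 1 * m 1 * m 2) + (m 1 * m 3 - m 1 * m 1 * m 2))), Finset.sum_const, Finset.card_univ, Fintype.card_fin, nsmul_eq_mul]
  have hV3 : (∑ i, ∑ j, ∫ ω, Y i ω ^ 2 * Y j ω ^ 2 ∂ℙ) = (N : ℝ) * ((N : ℝ) * (m 2 * m 2) + (m 4 - m 2 * m 2)) := by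
    rw [Finset.sum_congr rfl fun i _ => (Finset.sum_congr rfl fun j _ => V22 i j).trans
      (key1 i (m 4) (m 2 * m 2)), Finset.sum_const, Finset.card_univ, Fintype.card_fin,
      nsmul_eq_mul]
  have hV4 : (∑ i, ∑ j, ∫ ω, Y i ω * Y j ω ^ 3 ∂ℙ) = (N : ℝ) * ((N : ℝ) * (m 1 * m 3) + (m 4 - m 1 * m 3)) := by
    rw [Finset.sum_congr rfl fun i _ => (Finset.sum_congr rfl fun j _ => V13 i j).trans
      (key1 i (m 4) (m 1 * m 3)), Finset.sum_const, Finset.card_univ, Fintype.card_fin,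
      nsmul_eq_mul]
  -- pointwise expansions
  have hexp1 : ∀ ω, (∑ i, Y i ω) ^ 4 = ∑ i, ∑ j, ∑ k, ∑ l, Y i ω * Y j ω * Y k ω * Y l ω := by
    intro ω
    rw [show (∑ i, Y i ω) ^ 4
      = ((∑ i, Y i ω) * (∑ i, Y i ω)) * ((∑ i, Y i ω) * (∑ i, Y i ω)) by ring]
    simp only [Finset.sum_mul, Finset.mul_sum]
    exact Finset.sum_congr rfl fun i _ => Finset.sum_congr rfl fun j _ =>
      Finset.sum_congr rfl fun k _ => Finset.sum_congr rfl fun l _ => by ring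
  have hexp2 : ∀ ω, (∑ i, Y i ω) ^ 2 * (∑ i, Y i ω ^ 2)
      = ∑ i, ∑ j, ∑ k, Y i ω * Y j ω * Y k ω ^ 2 := by
    intro ω
    rw [show (∑ i, Y i ω) ^ 2 * (∑ i, Y i ω ^ 2)
      = ((∑ i, Y i ω) * (∑ i, Y i ω)) * (∑ i, Y i ω ^ 2) by ring]
    rw [Finset.sum_mul_sum, Finset.sum_mul]
    refine Finset.sum_congr rfl fun i _ => ?_
    rw [Finset.sum_mul]
    refine Finset.sum_congr rfl fun j _ => ?_
    rw [Finset.mul_sum]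
  have hexp3 : ∀ ω, (∑ i, Y i ω ^ 2) ^ 2 = ∑ i, ∑ j, Y i ω ^ 2 * Y j ω ^ 2 := by
    intro ω
    rw [show (∑ i, Y i ω ^ 2) ^ 2 = (∑ i, Y i ω ^ 2) * (∑ i, Y i ω ^ 2) by ring]
    simp only [Finset.sum_mul, Finset.mul_sum]
    exact Finset.sum_congr rfl fun i _ => Finset.sum_congr rfl fun j _ => by ring
  have hexp4 : ∀ ω, (∑ i, Y i ω) * (∑ i, Y i ω ^ 3) = ∑ i, ∑ j, Y i ω * Y j ω ^ 3 := by
    intro ω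
    rw [Finset.sum_mul_sum]
  -- expectations
  have hE1 : ∫ ω, (∑ i, Y i ω) ^ 4 ∂ℙ = (N : ℝ) * ((N : ℝ) * ((N : ℝ) * ((N : ℝ) * (m 1 * m 1 * (m 1 * m 1)) + (m 2 * m 1 * m 1 - (m 1 * m 1 * (m 1 * m 1))) + (m 1 * m 2 * m 1 - (m 1 * m 1 * (m 1 * m 1))) + (m 1 * m 1 * m 2 - (m 1 * m 1 * (m 1 * m 1)))) + (((N : ℝ) * (m 2 * m 1 * m 1) + (m 3 * m 1 - m 2 * m 1 * m 1) + (m 2 * m 2 - m 2 * m 1 * m 1)) - ((N : ℝ) * (m 1 * m 1 * (m 1 * m 1)) + (m 2 * m 1 * m 1 - (m 1 * m 1 * (m 1 * m 1))) + (m 1 * m 2 * m 1 - (m 1 * m 1 * (m 1 * m 1))) + (m 1 * m 1 * m 2 - (m 1 * m 1 * (m 1 * m 1))))) + (((N : ℝ) * (m 1 * m 2 * m 1) + (m 2 * m 2 - m 1 * m 2 * m 1) + (m 1 * m 3 - m 1 * m 2 * m 1)) - ((N : ℝ) * (m 1 * m 1 * (m 1 * m 1)) + (m 2 * m 1 * m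 1 - (m 1 * m 1 * (m 1 * m 1))) + (m 1 * m 2 * m 1 - (m 1 * m 1 * (m 1 * m 1))) + (m 1 * m 1 * m 2 - (m 1 * m 1 * (m 1 * m 1)))))) + (((N : ℝ) * ((N : ℝ) * (m 2 * m 1 * m 1) + (m 3 * m 1 - m 2 * m 1 * m 1) + (m 2 * m 2 - m 2 * m 1 * m 1)) + (((N : ℝ) * (m 3 * m 1) + (m 4 - m 3 * m 1)) - ((N : ℝ) * (m 2 * m 1 * m 1) + (m 3 * m 1 - m 2 * m 1 * m 1) + (m 2 * m 2 - m 2 * m 1 * m 1)))) - ((N : ℝ) * ((N : ℝ) * (m 1 * m 1 * (m 1 * m 1)) + (m 2 * m 1 * m 1 - (m 1 * m 1 * (m 1 * m 1))) + (m 1 * m 2 * m 1 - (m 1 * m 1 * (m 1 * m 1))) + (m 1 * m 1 * m 2 - (m 1 * m 1 * (m 1 * m 1)))) + (((N : ℝ) * (m 2 * m 1 * m 1) + (m 3 * m 1 - m 2 * m 1 * m 1) + (m 2 * m 2 - m 2 * m 1 * m 1)) - ((N : ℝ) * (m 1 * m 1 * (m 1 * m 1)) + (m 2 * m 1 * m 1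 - (m 1 * m 1 * (m 1 * m 1))) + (m 1 * m 2 * m 1 - (m 1 * m 1 * (m 1 * m 1))) + (m 1 * m 1 * m 2 - (m 1 * m 1 * (m 1 * m 1))))) + (((N : ℝ) * (m 1 * m 2 * m 1) + (m 2 * m 2 - m 1 * m 2 * m 1) + (m 1 * m 3 - m 1 * m 2 * m 1)) - ((N : ℝ) * (m 1 * m 1 * (m 1 * m 1)) + (m 2 * m 1 * m 1 - (m 1 * m 1 * (m 1 * m 1))) + (m 1 * m 2 * m 1 - (m 1 * m 1 * (m 1 * m 1))) + (m 1 * m 1 * m 2 - (m 1 * m 1 * (m 1 * m 1)))))))) := by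
    rw [show (fun ω => (∑ i, Y i ω) ^ 4)
      = fun ω => ∑ i, ∑ j, ∑ k, ∑ l, Y i ω * Y j ω * Y k ω * Y l ω from funext hexp1]
    rw [integral_finset_sum _ fun i _ => integrable_finset_sum _ fun j _ =>
      integrable_finset_sum _ fun k _ => integrable_finset_sum _ fun l _ => hI4 i j k l]
    rw [Finset.sum_congr rfl fun i _ => integral_finset_sum _ fun j _ =>
      integrable_finset_sum _ fun k _ => integrable_finset_sum _ fun l _ => hI4 i j k l]
    rw [Finset.sum_congr rfl fun i _ => Finset.sum_congr rfl fun j _ =>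
      integral_finset_sum _ fun k _ => integrable_finset_sum _ fun l _ => hI4 i j k l]
    rw [Finset.sum_congr rfl fun i _ => Finset.sum_congr rfl fun j _ =>
      Finset.sum_congr rfl fun k _ => integral_finset_sum _ fun l _ => hI4 i j k l]
    exact hV1
  have hE2 : ∫ ω, (∑ i, Y i ω) ^ 2 * (∑ i, Y i ω ^ 2) ∂ℙ = (N : ℝ) * ((N : ℝ) * ((N : ℝ) * (m 1 * m 1 * m 2) + (m 3 * m 1 - m 1 * m 1 * m 2) + (m 1 * m 3 - m 1 * m 1 * m 2)) + (((N : ℝ) * (m 2 * m 2) + (m 4 - m 2 * m 2)) - ((N : ℝ) * (m 1 * m 1 * m 2) + (m 3 * m 1 - m 1 * m 1 * m 2) + (m 1 * m 3 - m 1 * m 1 * m 2)))) := by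
    rw [show (fun ω => (∑ i, Y i ω) ^ 2 * (∑ i, Y i ω ^ 2))
      = fun ω => ∑ i, ∑ j, ∑ k, Y i ω * Y j ω * Y k ω ^ 2 from funext hexp2]
    rw [integral_finset_sum _ fun i _ => integrable_finset_sum _ fun j _ =>
      integrable_finset_sum _ fun k _ => hI112 i j k]
    rw [Finset.sum_congr rfl fun i _ => integral_finset_sum _ fun j _ =>
      integrable_finset_sum _ fun k _ => hI112 i j k]
    rw [Finset.sum_congr rfl fun i _ => Finset.sum_congr rfl fun j _ =>
      integral_finset_sum _ fun k _ => hI112 i j k]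
    exact hV2
  have hE3 : ∫ ω, (∑ i, Y i ω ^ 2) ^ 2 ∂ℙ = (N : ℝ) * ((N : ℝ) * (m 2 * m 2) + (m 4 - m 2 * m 2)) := by
    rw [show (fun ω => (∑ i, Y i ω ^ 2) ^ 2)
      = fun ω => ∑ i, ∑ j, Y i ω ^ 2 * Y j ω ^ 2 from funext hexp3]
    rw [integral_finset_sum _ fun i _ => integrable_finset_sum _ fun j _ => hI22 i j]
    rw [Finset.sum_congr rfl fun i _ => integral_finset_sum _ fun j _ => hI22 i j]
    exact hV3
  have hE4 : ∫ ω, (∑ i, Y i ω) * (∑ i, Y i ω ^ 3) ∂ℙ = (N : ℝ) * ((N : ℝ) * (m 1 * m 3) + (m 4 - m 1 * m 3)) := by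
    rw [show (fun ω => (∑ i, Y i ω) * (∑ i, Y i ω ^ 3))
      = fun ω => ∑ i, ∑ j, Y i ω * Y j ω ^ 3 from funext hexp4]
    rw [integral_finset_sum _ fun i _ => integrable_finset_sum _ fun j _ => hI31 i j]
    rw [Finset.sum_congr rfl fun i _ => integral_finset_sum _ fun j _ => hI31 i j]
    exact hV4
  have hE5 : ∫ ω, (∑ i, Y i ω ^ 4) ∂ℙ = (N : ℝ) * m 4 := by
    rw [integral_finset_sum _ fun i _ => hIpow i 4 le_rfl]
    rw [Finset.sum_congr rfl fun i _ => hm i 4, Finset.sum_const, Finset.card_univ,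
      Fintype.card_fin, nsmul_eq_mul]
  -- integrability of the five monomials
  have If1 : Integrable (fun ω => (∑ i, Y i ω) ^ 4) ℙ := by
    rw [show (fun ω => (∑ i, Y i ω) ^ 4)
      = fun ω => ∑ i, ∑ j, ∑ k, ∑ l, Y i ω * Y j ω * Y k ω * Y l ω from funext hexp1]
    exact integrable_finset_sum _ fun i _ => integrable_finset_sum _ fun j _ =>
      integrable_finset_sum _ fun k _ => integrable_finset_sum _ fun l _ => hI4 i j k l
  have If2 : Integrable (fun ω => (∑ i, Y i ω) ^ 2 * (∑ i, Y i ω ^ 2)) ℙ := by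
    rw [show (fun ω => (∑ i, Y i ω) ^ 2 * (∑ i, Y i ω ^ 2))
      = fun ω => ∑ i, ∑ j, ∑ k, Y i ω * Y j ω * Y k ω ^ 2 from funext hexp2]
    exact integrable_finset_sum _ fun i _ => integrable_finset_sum _ fun j _ =>
      integrable_finset_sum _ fun k _ => hI112 i j k
  have If3 : Integrable (fun ω => (∑ i, Y i ω ^ 2) ^ 2) ℙ := by
    rw [show (fun ω => (∑ i, Y i ω ^ 2) ^ 2)
      = fun ω => ∑ i, ∑ j, Y i ω ^ 2 * Y j ω ^ 2 from funext hexp3]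
    exact integrable_finset_sum _ fun i _ => integrable_finset_sum _ fun j _ => hI22 i j
  have If4 : Integrable (fun ω => (∑ i, Y i ω) * (∑ i, Y i ω ^ 3)) ℙ := by
    rw [show (fun ω => (∑ i, Y i ω) * (∑ i, Y i ω ^ 3))
      = fun ω => ∑ i, ∑ j, Y i ω * Y j ω ^ 3 from funext hexp4]
    exact integrable_finset_sum _ fun i _ => integrable_finset_sum _ fun j _ => hI31 i j
  have If5 : Integrable (fun ω => ∑ i, Y i ω ^ 4) ℙ :=
    integrable_finset_sum _ fun i _ => hIpow i 4 le_rfl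
  -- denominator nonzero
  have hN4 : (4 : ℝ) ≤ (N : ℝ) := by exact_mod_cast hN
  have hD : (N : ℝ) * ((N : ℝ) - 1) * ((N : ℝ) - 2) * ((N : ℝ) - 3) ≠ 0 := by
    have : (0 : ℝ) < (N : ℝ) * ((N : ℝ) - 1) * ((N : ℝ) - 2) * ((N : ℝ) - 3) :=
      mul_pos (mul_pos (mul_pos (by linarith) (by linarith)) (by linarith)) (by linarith)
    exact this.ne'
  -- value of μ₄
  have hm0 : m 0 = 1 := by simp [hmdef]
  have hμgen : ∀ v : Fin N, ∫ ω, (X v ω - ∫ ω', X v ω' ∂ℙ) ^ 4 ∂ℙ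
      = m 4 - 4 * m 1 * m 3 + 6 * m 1 ^ 2 * m 2 - 3 * m 1 ^ 4 := by
    intro v
    have hc : ∫ ω', X v ω' ∂ℙ = m 1 := by
      rw [integral_congr_ae (hae v)]
      simpa using hm v 1
    rw [hc]
    rw [integral_congr_ae (show (fun ω => (X v ω - m 1) ^ 4) =ᵐ[ℙ]
      fun ω => (Y v ω - m 1) ^ 4 from by filter_upwards [hae v] with ω h; rw [h])]
    rw [show (fun ω => (Y v ω - m 1) ^ 4) = fun ω =>
      Y v ω ^ 4 + ((-4 * m 1) * Y v ω ^ 3 + ((6 * m 1 ^ 2) * Y v ω ^ 2 +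
      ((-4 * m 1 ^ 3) * Y v ω ^ 1 + (m 1 ^ 4) * Y v ω ^ 0))) from funext fun ω => by ring]
    have i4 : Integrable (fun ω => Y v ω ^ 4) ℙ := hIpow v 4 le_rfl
    have i3 : Integrable (fun ω => (-4 * m 1) * Y v ω ^ 3) ℙ :=
      (hIpow v 3 (by norm_num)).const_mul (-4 * m 1)
    have i2 : Integrable (fun ω => (6 * m 1 ^ 2) * Y v ω ^ 2) ℙ :=
      (hIpow v 2 (by norm_num)).const_mul (6 * m 1 ^ 2)
    have i1 : Integrable (fun ω => (-4 * m 1 ^ 3) * Y v ω ^ 1) ℙ :=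
      (hIpow v 1 (by norm_num)).const_mul (-4 * m 1 ^ 3)
    have i0' : Integrable (fun ω => (m 1 ^ 4) * Y v ω ^ 0) ℙ :=
      (hIpow v 0 (by norm_num)).const_mul (m 1 ^ 4)
    have t3 : Integrable (fun ω => (-4 * m 1 ^ 3) * Y v ω ^ 1 + (m 1 ^ 4) * Y v ω ^ 0) ℙ :=
      i1.add i0'
    have t2 : Integrable (fun ω => (6 * m 1 ^ 2) * Y v ω ^ 2
        + ((-4 * m 1 ^ 3) * Y v ω ^ 1 + (m 1 ^ 4) * Y v ω ^ 0)) ℙ := i2.add t3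
    have t1 : Integrable (fun ω => (-4 * m 1) * Y v ω ^ 3 + ((6 * m 1 ^ 2) * Y v ω ^ 2
        + ((-4 * m 1 ^ 3) * Y v ω ^ 1 + (m 1 ^ 4) * Y v ω ^ 0))) ℙ := i3.add t2
    rw [integral_add i4 t1, integral_add i3 t2, integral_add i2 t3, integral_add i1 i0',
      integral_const_mul, integral_const_mul, integral_const_mul, integral_const_mul,
      hm v 4, hm v 3, hm v 2, hm v 1, hm v 0, hm0]
    ring
  -- main computation with Y
  have main : ∫ ω, ((N : ℝ) * ((N : ℝ) - 1) * ((N : ℝ) - 2) * ((N : ℝ) - 3))⁻¹ *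
        (-3 * (∑ i, Y i ω) ^ 4 + 6 * (N : ℝ) * (∑ i, Y i ω) ^ 2 * (∑ i, Y i ω ^ 2)
          + (9 - 6 * (N : ℝ)) * (∑ i, Y i ω ^ 2) ^ 2
          + (-4 * (N : ℝ) ^ 2 + 8 * (N : ℝ) - 12) * (∑ i, Y i ω) * (∑ i, Y i ω ^ 3)
          + ((N : ℝ) ^ 3 - 2 * (N : ℝ) ^ 2 + 3 * (N : ℝ)) * (∑ i, Y i ω ^ 4)) ∂ℙ
      = m 4 - 4 * m 1 * m 3 + 6 * m 1 ^ 2 * m 2 - 3 * m 1 ^ 4 := by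
    rw [integral_const_mul]
    rw [show (fun ω => -3 * (∑ i, Y i ω) ^ 4 + 6 * (N : ℝ) * (∑ i, Y i ω) ^ 2 * (∑ i, Y i ω ^ 2)
          + (9 - 6 * (N : ℝ)) * (∑ i, Y i ω ^ 2) ^ 2
          + (-4 * (N : ℝ) ^ 2 + 8 * (N : ℝ) - 12) * (∑ i, Y i ω) * (∑ i, Y i ω ^ 3)
          + ((N : ℝ) ^ 3 - 2 * (N : ℝ) ^ 2 + 3 * (N : ℝ)) * (∑ i, Y i ω ^ 4))
      = fun ω => (-3 : ℝ) * ((∑ i, Y i ω) ^ 4)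
          + ((6 * (N : ℝ)) * ((∑ i, Y i ω) ^ 2 * (∑ i, Y i ω ^ 2))
          + ((9 - 6 * (N : ℝ)) * ((∑ i, Y i ω ^ 2) ^ 2)
          + ((-4 * (N : ℝ) ^ 2 + 8 * (N : ℝ) - 12) * ((∑ i, Y i ω) * (∑ i, Y i ω ^ 3))
          + ((N : ℝ) ^ 3 - 2 * (N : ℝ) ^ 2 + 3 * (N : ℝ)) * (∑ i, Y i ω ^ 4))))
      from funext fun ω => by ring]
    have J1 : Integrable (fun ω => (-3 : ℝ) * ((∑ i, Y i ω) ^ 4)) ℙ := If1.const_mul (-3 : ℝ)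
    have J2 : Integrable (fun ω => (6 * (N : ℝ)) * ((∑ i, Y i ω) ^ 2 * (∑ i, Y i ω ^ 2))) ℙ :=
      If2.const_mul (6 * (N : ℝ))
    have J3 : Integrable (fun ω => (9 - 6 * (N : ℝ)) * ((∑ i, Y i ω ^ 2) ^ 2)) ℙ :=
      If3.const_mul (9 - 6 * (N : ℝ))
    have J4 : Integrable (fun ω => (-4 * (N : ℝ) ^ 2 + 8 * (N : ℝ) - 12)
        * ((∑ i, Y i ω) * (∑ i, Y i ω ^ 3))) ℙ :=
      If4.const_mul (-4 * (N : ℝ) ^ 2 + 8 * (N : ℝ) - 12)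
    have J5 : Integrable (fun ω => ((N : ℝ) ^ 3 - 2 * (N : ℝ) ^ 2 + 3 * (N : ℝ))
        * (∑ i, Y i ω ^ 4)) ℙ :=
      If5.const_mul ((N : ℝ) ^ 3 - 2 * (N : ℝ) ^ 2 + 3 * (N : ℝ))
    have T4 : Integrable (fun ω => (-4 * (N : ℝ) ^ 2 + 8 * (N : ℝ) - 12)
        * ((∑ i, Y i ω) * (∑ i, Y i ω ^ 3))
        + ((N : ℝ) ^ 3 - 2 * (N : ℝ) ^ 2 + 3 * (N : ℝ)) * (∑ i, Y i ω ^ 4)) ℙ := J4.add J5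
    have T3 : Integrable (fun ω => (9 - 6 * (N : ℝ)) * ((∑ i, Y i ω ^ 2) ^ 2)
        + ((-4 * (N : ℝ) ^ 2 + 8 * (N : ℝ) - 12) * ((∑ i, Y i ω) * (∑ i, Y i ω ^ 3))
        + ((N : ℝ) ^ 3 - 2 * (N : ℝ) ^ 2 + 3 * (N : ℝ)) * (∑ i, Y i ω ^ 4))) ℙ := J3.add T4
    have T2 : Integrable (fun ω => (6 * (N : ℝ)) * ((∑ i, Y i ω) ^ 2 * (∑ i, Y i ω ^ 2))
        + ((9 - 6 * (N : ℝ)) * ((∑ i, Y i ω ^ 2) ^ 2)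
        + ((-4 * (N : ℝ) ^ 2 + 8 * (N : ℝ) - 12) * ((∑ i, Y i ω) * (∑ i, Y i ω ^ 3))
        + ((N : ℝ) ^ 3 - 2 * (N : ℝ) ^ 2 + 3 * (N : ℝ)) * (∑ i, Y i ω ^ 4)))) ℙ := J2.add T3
    rw [integral_add J1 T2, integral_add J2 T3, integral_add J3 T4, integral_add J4 J5,
      integral_const_mul, integral_const_mul, integral_const_mul, integral_const_mul,
      integral_const_mul, hE1, hE2, hE3, hE4, hE5]
    rw [inv_mul_eq_div, div_eq_iff hD]
    ring
  -- conclude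
  refine Eq.trans (integral_congr_ae ?_) (main.trans ?_)
  · have haeall : ∀ᵐ ω ∂ℙ, ∀ i, X i ω = Y i ω := ae_all_iff.2 fun i => hae i
    filter_upwards [haeall] with ω hω
    simp only [hS, pow_one]
    rw [show (∑ i, X i ω) = ∑ i, Y i ω from Finset.sum_congr rfl fun i _ => hω i,
      show (∑ i, X i ω ^ 2) = ∑ i, Y i ω ^ 2 from Finset.sum_congr rfl fun i _ => by rw [hω i],
      show (∑ i, X i ω ^ 3) = ∑ i, Y i ω ^ 3 from Finset.sum_congr rfl fun i _ => by rw [hω i],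
      show (∑ i, X i ω ^ 4) = ∑ i, Y i ω ^ 4 from Finset.sum_congr rfl fun i _ => by rw [hω i]]
  · rw [hμ₄]
    exact (hμgen _).symm
end

section
/- Optimal MLMC sample allocation: minimizing the total cost ∑_{l=0}^L N_l C_l subject to the sampling-error constraint ∑_{l=0}^L V_l/N_l ≤ ε²/2 (treating N_l as positive reals) is achieved by N_l = τ·sqrt(V_l/C_l) with τ = (2/ε²)·∑_{l=0}^L sqrt(V_l C_l), and the resulting minimal cost is (2/ε²)(∑_{l=0}^L sqrt(V_l C_l))². -/
open Finset

/-- Optimal MLMC sample allocation: with `N l = τ·√(V l / C l)` and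
`τ = (2/ε²)·∑ l, √(V l · C l)`, the sampling-error constraint `∑ l, V l / N l ≤ ε²/2`
holds, any other positive allocation satisfying the constraint has at least the same
total cost, and the minimal cost equals `(2/ε²)(∑ l, √(V l · C l))²`. -/
theorem mlmc_optimal_allocation (L : ℕ) (V C : Fin (L + 1) → ℝ)
    (hV : ∀ l, 0 < V l) (hC : ∀ l, 0 < C l) (ε : ℝ) (hε : 0 < ε)
    (τ : ℝ) (hτ : τ = (2 / ε ^ 2) * ∑ l, Real.sqrt (V l * C l))
    (Nopt : Fin (L + 1) → ℝ) (hNopt : ∀ l, Nopt l = τ * Real.sqrt (V l / C l)) :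
    (∑ l, V l / Nopt l ≤ ε ^ 2 / 2) ∧
    (∀ N : Fin (L + 1) → ℝ, (∀ l, 0 < N l) → ∑ l, V l / N l ≤ ε ^ 2 / 2 →
      ∑ l, Nopt l * C l ≤ ∑ l, N l * C l) ∧
    ∑ l, Nopt l * C l = (2 / ε ^ 2) * (∑ l, Real.sqrt (V l * C l)) ^ 2 := by
  set S : ℝ := ∑ l, Real.sqrt (V l * C l) with hS
  have hSpos : 0 < S := Finset.sum_pos (fun l _ => Real.sqrt_pos.2 (mul_pos (hV l) (hC l)))
    Finset.univ_nonempty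
  have hε2 : (0:ℝ) < ε ^ 2 := by positivity
  have hτpos : 0 < τ := by rw [hτ]; positivity
  have key : ∀ l, Real.sqrt (V l / C l) * C l = Real.sqrt (V l * C l) ∧
      V l / Real.sqrt (V l / C l) = Real.sqrt (V l * C l) := by
    intro l
    have hv := hV l; have hc := hC l
    have hsv : 0 < Real.sqrt (V l) := Real.sqrt_pos.2 hv
    have hsc : 0 < Real.sqrt (C l) := Real.sqrt_pos.2 hc
    have hv2 : Real.sqrt (V l) ^ 2 = V l := Real.sq_sqrt hv.le
    have hc2 : Real.sqrt (C l) ^ 2 = C l := Real.sq_sqrt hc.le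
    have h1 : Real.sqrt (V l / C l) = Real.sqrt (V l) / Real.sqrt (C l) :=
      Real.sqrt_div hv.le _
    have h2 : Real.sqrt (V l * C l) = Real.sqrt (V l) * Real.sqrt (C l) :=
      Real.sqrt_mul hv.le _
    constructor
    · rw [h1, h2]; field_simp; nlinarith [hc2]
    · rw [h1, h2]; field_simp; nlinarith [hv2]
  have herr : ∑ l, V l / Nopt l = ε ^ 2 / 2 := by
    have : ∀ l, V l / Nopt l = Real.sqrt (V l * C l) / τ := by
      intro l
      rw [hNopt l, div_mul_eq_div_div_swap, (key l).2]
    rw [Finset.sum_congr rfl (fun l _ => this l), ← Finset.sum_div, ← hS, hτ]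
    field_simp
  have hcost : ∑ l, Nopt l * C l = (2 / ε ^ 2) * S ^ 2 := by
    have : ∀ l, Nopt l * C l = τ * Real.sqrt (V l * C l) := by
      intro l; rw [hNopt l, mul_assoc, (key l).1]
    rw [Finset.sum_congr rfl (fun l _ => this l), ← Finset.mul_sum, ← hS, hτ]
    ring
  refine ⟨herr.le, ?_, hcost⟩
  intro N hN hNc
  have hcs := sum_mul_sq_le_sq_mul_sq Finset.univ
    (fun l => Real.sqrt (V l / N l)) (fun l => Real.sqrt (N l * C l))
  have heq : ∀ l : Fin (L+1), Real.sqrt (V l / N l) * Real.sqrt (N l * C l)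
      = Real.sqrt (V l * C l) := by
    intro l
    have h1 := hV l; have h2 := hC l; have h3 := hN l
    rw [← Real.sqrt_mul (by positivity)]
    congr 1
    field_simp
  have heq2 : ∀ l : Fin (L+1), Real.sqrt (V l / N l) ^ 2 = V l / N l := fun l =>
    Real.sq_sqrt (div_nonneg (hV l).le (hN l).le)
  have heq3 : ∀ l : Fin (L+1), Real.sqrt (N l * C l) ^ 2 = N l * C l := fun l =>
    Real.sq_sqrt (mul_nonneg (hN l).le (hC l).le)
  simp only [heq, heq2, heq3] at hcs
  have hsumNC : 0 ≤ ∑ l, N l * C l :=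
    Finset.sum_nonneg fun l _ => (mul_pos (hN l) (hC l)).le
  have h2 : S ^ 2 ≤ (ε ^ 2 / 2) * ∑ l, N l * C l := by
    calc S ^ 2 ≤ (∑ l, V l / N l) * ∑ l, N l * C l := hcs
    _ ≤ (ε ^ 2 / 2) * ∑ l, N l * C l := mul_le_mul_of_nonneg_right hNc hsumNC
  rw [hcost, div_mul_eq_mul_div, div_le_iff₀ hε2]
  nlinarith [h2]
end

section
/- MLMC cost bound in the regime β > γ: assume h_l = h_0·2^{−l}, V_l ≤ c_2 h_l^β, C_l ≤ c_3 h_l^{−γ} with β > γ > 0, and use the optimal allocation for sampling tolerance ε²/2. Then there exists a constant c_4 (independent of ε and L) such that the total cost ∑_l N_l C_l ≤ c_4 ε^{−2}. -/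
open Finset

/-- MLMC cost bound in the regime `β > γ`: for a geometric mesh hierarchy
`h l = h₀·2^(−l)` with level variances `V l ≤ c₂ (h l)^β` and costs `C l ≤ c₃ (h l)^(−γ)`,
`β > γ > 0`, the optimal allocation `N l = (2/ε²)(∑ k, √(V k · C k))·√(V l / C l)` for
sampling tolerance `ε²/2` yields a total cost bounded by `c₄ ε⁻²` with `c₄` independent
of `ε` and `L`. -/
theorem mlmc_cost_bound_beta_gt_gamma (h₀ c₂ c₃ β γ : ℝ)
    (hh₀ : 0 < h₀) (hc₂ : 0 < c₂) (hc₃ : 0 < c₃)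
    (hγ : 0 < γ) (hβγ : γ < β) :
    ∃ c₄ : ℝ, 0 < c₄ ∧
      ∀ (L : ℕ) (ε : ℝ), 0 < ε →
        ∀ V C : Fin (L + 1) → ℝ,
          (∀ l, 0 < V l) → (∀ l, 0 < C l) →
          (∀ l, V l ≤ c₂ * (h₀ * 2 ^ (-(l : ℝ))) ^ β) →
          (∀ l, C l ≤ c₃ * (h₀ * 2 ^ (-(l : ℝ))) ^ (-γ)) →
          ∀ N : Fin (L + 1) → ℝ,
            (∀ l, N l = (2 / ε ^ 2) * (∑ k, Real.sqrt (V k * C k)) * Real.sqrt (V l / C l)) →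
            ∑ l, N l * C l ≤ c₄ * ε ^ (-2 : ℝ) := by
  set δ : ℝ := (β - γ) / 2 with hδdef
  have hδ : 0 < δ := by simp [hδdef]; linarith
  set r : ℝ := (2 : ℝ) ^ (-δ) with hrdef
  have hr0 : 0 < r := Real.rpow_pos_of_pos (by norm_num) _
  have hr1 : r < 1 := Real.rpow_lt_one_of_one_lt_of_neg (by norm_num) (by linarith)
  set K : ℝ := Real.sqrt (c₂ * c₃) * h₀ ^ δ with hKdef
  have hK : 0 < K := by
    apply mul_pos (Real.sqrt_pos.2 (by positivity)) (Real.rpow_pos_of_pos hh₀ _)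
  set M : ℝ := K / (1 - r) with hMdef
  have hM : 0 < M := div_pos hK (by linarith)
  refine ⟨2 * M ^ 2, by positivity, ?_⟩
  intro L ε hε V C hV hC hVb hCb N hN
  set T : ℝ := ∑ k, Real.sqrt (V k * C k) with hTdef
  have hT0 : 0 ≤ T := Finset.sum_nonneg fun k _ => Real.sqrt_nonneg _
  -- each term of T is bounded by K * r ^ k
  have hterm : ∀ k : Fin (L + 1), Real.sqrt (V k * C k) ≤ K * r ^ (k : ℕ) := by
    intro k
    have hh : 0 < h₀ * 2 ^ (-(k : ℝ)) := by positivity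
    have h1 : V k * C k ≤ c₂ * c₃ * (h₀ * 2 ^ (-(k : ℝ))) ^ (β - γ) := by
      have := mul_le_mul (hVb k) (hCb k) (hC k).le (by positivity)
      calc V k * C k ≤ c₂ * (h₀ * 2 ^ (-(k : ℝ))) ^ β * (c₃ * (h₀ * 2 ^ (-(k : ℝ))) ^ (-γ)) :=
            this
        _ = c₂ * c₃ * (h₀ * 2 ^ (-(k : ℝ))) ^ (β - γ) := by
            rw [show β - γ = β + (-γ) by ring, Real.rpow_add hh]; ring
    have h2 : Real.sqrt (V k * C k) ≤ Real.sqrt (c₂ * c₃ * (h₀ * 2 ^ (-(k : ℝ))) ^ (β - γ)) :=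
      Real.sqrt_le_sqrt h1
    refine h2.trans_eq ?_
    have e1 : ((2:ℝ) ^ (-(k:ℝ))) ^ δ = r ^ (k : ℕ) := by
      rw [← Real.rpow_natCast r, hrdef, ← Real.rpow_mul (by norm_num : (0:ℝ) ≤ 2),
        ← Real.rpow_mul (by norm_num : (0:ℝ) ≤ 2)]
      congr 1; ring
    calc Real.sqrt (c₂ * c₃ * (h₀ * 2 ^ (-(k : ℝ))) ^ (β - γ))
        = Real.sqrt (c₂ * c₃) * Real.sqrt ((h₀ * 2 ^ (-(k : ℝ))) ^ (β - γ)) :=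
          Real.sqrt_mul (by positivity) _
      _ = Real.sqrt (c₂ * c₃) * (h₀ * 2 ^ (-(k : ℝ))) ^ δ := by
          congr 1
          rw [Real.sqrt_eq_rpow, ← Real.rpow_mul hh.le]
          congr 1
          rw [hδdef]; ring
      _ = Real.sqrt (c₂ * c₃) * (h₀ ^ δ * ((2:ℝ) ^ (-(k : ℝ))) ^ δ) := by
          rw [Real.mul_rpow hh₀.le (by positivity)]
      _ = K * r ^ (k : ℕ) := by rw [hKdef, e1]; ring
  have hTM : T ≤ M := by
    calc T ≤ ∑ k : Fin (L + 1), K * r ^ (k : ℕ) := Finset.sum_le_sum fun k _ => hterm k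
      _ = K * ∑ i ∈ Finset.range (L + 1), r ^ i := by
          rw [← Finset.mul_sum, Fin.sum_univ_eq_sum_range (fun i => r ^ i)]
      _ ≤ K * (1 - r)⁻¹ := by
          refine mul_le_mul_of_nonneg_left ?_ hK.le
          have hsum : ∑ i ∈ Finset.range (L + 1), r ^ i ≤ ∑' i : ℕ, r ^ i :=
            Summable.sum_le_tsum _ (fun i _ => by positivity)
              (summable_geometric_of_lt_one hr0.le hr1)
          rw [tsum_geometric_of_lt_one hr0.le hr1] at hsum
          exact hsum
      _ = M := by rw [hMdef, div_eq_mul_inv]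
  -- rewrite the cost
  have hcost : ∑ l, N l * C l = (2 / ε ^ 2) * T * T := by
    rw [hTdef, Finset.mul_sum]
    refine Finset.sum_congr rfl fun l _ => ?_
    rw [hN l]
    have : Real.sqrt (V l / C l) * C l = Real.sqrt (V l * C l) := by
      rw [show V l * C l = V l / C l * (C l) ^ 2 by field_simp [(hC l).ne'],
        Real.sqrt_mul (div_pos (hV l) (hC l)).le, Real.sqrt_sq (hC l).le]
    rw [mul_assoc, this]
  rw [hcost]
  have hrpow : ε ^ (-2 : ℝ) = (ε ^ 2)⁻¹ := by
    rw [show (-2 : ℝ) = -((2:ℕ):ℝ) by norm_num, Real.rpow_neg hε.le, Real.rpow_natCast]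
  rw [hrpow]
  have hT2 : T * T ≤ M ^ 2 := by nlinarith
  have hε2 : (0:ℝ) < ε ^ 2 := by positivity
  calc (2 / ε ^ 2) * T * T = 2 * (T * T) * (ε ^ 2)⁻¹ := by ring
    _ ≤ 2 * M ^ 2 * (ε ^ 2)⁻¹ :=
        mul_le_mul_of_nonneg_right (by linarith) (by positivity)
end
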